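/- arXiv:math/0412125 — 3 statements merged into one kernel-verified Lean document; each statement's English description precedes it below -/
import Mathlib

section
/- Let f = u + ιv be a left-Class II function on an open set ω ⊆ ℍ with ω ∩ ℝ = ∅. Then at every p = t + r·ι(α,β) ∈ ω with r > 0 and sin β ≠ 0, the imaginary derivative of f equals twice its imaginary component: ι_α⁻¹·∂g/∂α + ι_β⁻¹·∂g/∂β = 2v(p), where g(t,r,α,β) = f(t + r·ι(α,β)). -/
open Quaternion

noncomputable section

/-- The quaternionic imaginary units. -/
def qI : ℍ[ℝ] := ⟨0, 1, 0, 0⟩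
def qJ : ℍ[ℝ] := ⟨0, 0, 1, 0⟩
def qK : ℍ[ℝ] := ⟨0, 0, 0, 1⟩

/-- `ι(p) = Im p / |Im p|`. -/
def iota (p : ℍ[ℝ]) : ℍ[ℝ] := (‖p.im‖)⁻¹ • p.im

/-- The left Fueter operator `∂f/∂_l p̄`. -/
def fueterL (f : ℍ[ℝ] → ℍ[ℝ]) (p : ℍ[ℝ]) : ℍ[ℝ] :=
  fderiv ℝ f p 1 + qI * fderiv ℝ f p qI + qJ * fderiv ℝ f p qJ + qK * fderiv ℝ f p qK

/-- The right Fueter operator `∂f/∂_r p̄`. -/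
def fueterR (f : ℍ[ℝ] → ℍ[ℝ]) (p : ℍ[ℝ]) : ℍ[ℝ] :=
  fderiv ℝ f p 1 + fderiv ℝ f p qI * qI + fderiv ℝ f p qJ * qJ + fderiv ℝ f p qK * qK

/-- Spherical parametrization of the imaginary unit sphere. -/
def sph (α β : ℝ) : ℍ[ℝ] :=
  ⟨0, Real.cos α * Real.sin β, Real.sin α * Real.sin β, Real.cos β⟩

/-- `∂ι/∂α`. -/
def sphA (α β : ℝ) : ℍ[ℝ] :=
  ⟨0, -(Real.sin α * Real.sin β), Real.cos α * Real.sin β, 0⟩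

/-- `∂ι/∂β`. -/
def sphB (α β : ℝ) : ℍ[ℝ] :=
  ⟨0, Real.cos α * Real.cos β, Real.sin α * Real.cos β, -Real.sin β⟩

/-- Complex Extrinsic on ω. -/
def IsCE (f : ℍ[ℝ] → ℍ[ℝ]) (ω : Set ℍ[ℝ]) : Prop := ∀ p ∈ ω, f p * p = p * f p

/-- Class I : C¹, CE and `∂f/∂t + ι ∂f/∂r = 0`. -/
def IsClassI (f : ℍ[ℝ] → ℍ[ℝ]) (ω : Set ℍ[ℝ]) : Prop :=
  ContDiffOn ℝ 1 f ω ∧ IsCE f ω ∧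
  ∀ p ∈ ω, fderiv ℝ f p 1 + iota p * fderiv ℝ f p (iota p) = 0

/-- Class II with an explicit decomposition `f = u + ι v`. -/
def IsClassIIWith (f : ℍ[ℝ] → ℍ[ℝ]) (u v : ℍ[ℝ] → ℝ) (ω : Set ℍ[ℝ]) : Prop :=
  ContDiffOn ℝ 1 f ω ∧
  (∀ p ∈ ω, f p = (u p : ℍ[ℝ]) + (v p : ℍ[ℝ]) * iota p) ∧
  ∀ p ∈ ω, fueterL f p = ((-2 * v p / ‖p.im‖ : ℝ) : ℍ[ℝ])

/-- (left-) Class II. -/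
def IsClassII (f : ℍ[ℝ] → ℍ[ℝ]) (ω : Set ℍ[ℝ]) : Prop := ∃ u v, IsClassIIWith f u v ω

/-- right-Class II with an explicit decomposition. -/
def IsClassIIRWith (f : ℍ[ℝ] → ℍ[ℝ]) (u v : ℍ[ℝ] → ℝ) (ω : Set ℍ[ℝ]) : Prop :=
  ContDiffOn ℝ 1 f ω ∧
  (∀ p ∈ ω, f p = (u p : ℍ[ℝ]) + (v p : ℍ[ℝ]) * iota p) ∧
  ∀ p ∈ ω, fueterR f p = ((-2 * v p / ‖p.im‖ : ℝ) : ℍ[ℝ])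

/-- right-Class II. -/
def IsClassIIR (f : ℍ[ℝ] → ℍ[ℝ]) (ω : Set ℍ[ℝ]) : Prop := ∃ u v, IsClassIIRWith f u v ω

/-- Complex Intrinsic : `u`, `v` depend only on `(t, r)`. -/
def IsCI (f : ℍ[ℝ] → ℍ[ℝ]) (ω : Set ℍ[ℝ]) : Prop :=
  ∃ ut vt : ℝ → ℝ → ℝ, ∀ p ∈ ω,
    f p = (ut p.re ‖p.im‖ : ℍ[ℝ]) + (vt p.re ‖p.im‖ : ℍ[ℝ]) * iota p

/-- Class III : Class I and CI. -/
def IsClassIII (f : ℍ[ℝ] → ℍ[ℝ]) (ω : Set ℍ[ℝ]) : Prop := IsClassI f ω ∧ IsCI f ω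


lemma span3 (ca sa cb sb x1 x2 x3 : ℝ) (ha : ca^2+sa^2=1) (hb : cb^2+sb^2=1)
    (h1 : x2*cb - x3*(sa*sb) = 0) (h2 : x3*(ca*sb) - x1*cb = 0)
    (h3 : x1*(sa*sb) - x2*(ca*sb) = 0) :
    ∃ l : ℝ, x1 = l*(ca*sb) ∧ x2 = l*(sa*sb) ∧ x3 = l*cb := by
  refine ⟨x1*(ca*sb)+x2*(sa*sb)+x3*cb, ?_, ?_, ?_⟩
  · linear_combination (sa*sb)*h3 - cb*h2 - x1*sb^2*ha - x1*hb
  · linear_combination (-(ca*sb))*h3 + cb*h1 - x2*sb^2*ha - x2*hb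
  · linear_combination (-(sa*sb))*h1 + (ca*sb)*h2 - x3*sb^2*ha - x3*hb

lemma final (v0 w0 z0 U T ca sa cb sb : ℝ) (hsb : sb ≠ 0)
    (ha : ca^2 + sa^2 = 1) (hb : cb^2 + sb^2 = 1)
    (ι ia ib : ℍ[ℝ])
    (hι : ι = ⟨0, ca*sb, sa*sb, cb⟩)
    (hia : ia = ⟨0, -(sa*sb), ca*sb, 0⟩)
    (hib : ib = ⟨0, ca*cb, sa*cb, -sb⟩)
    (hI1 : w0 = sb*T) (hI2 : U = -(sb*z0)) :
    (-(sb^2)⁻¹) • ia * (((w0 : ℝ) : ℍ[ℝ]) + v0 • ia + U • ι)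
      + (-ib) * (((z0 : ℝ) : ℍ[ℝ]) + v0 • ib + T • ι)
      = ((2*v0 : ℝ) : ℍ[ℝ]) := by
  apply Quaternion.ext <;> simp [Quaternion.re_mul, Quaternion.imI_mul, Quaternion.imJ_mul, Quaternion.imK_mul] <;> subst hι hia hib hI1 hI2
  · field_simp; linear_combination (sb^2*v0 + sb^2*v0*cb^2 + sb^3*T*cb)*ha + (sb^2*v0)*hb
  · field_simp; linear_combination (-(sa*T*sb))*hb
  · field_simp; linear_combination (ca*T*sb)*hb
  · field_simp; linear_combination (-(sb^3*z0))*ha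

set_option maxHeartbeats 1000000 in
lemma key (t r v0 ca sa cb sb : ℝ) (hr : r ≠ 0) (hsb : sb ≠ 0)
    (ha : ca^2 + sa^2 = 1) (hb : cb^2 + sb^2 = 1)
    (p ι ia ib A B C E : ℍ[ℝ])
    (hp : p = ⟨t, r*(ca*sb), r*(sa*sb), r*cb⟩)
    (hι : ι = ⟨0, ca*sb, sa*sb, cb⟩)
    (hia : ia = ⟨0, -(sa*sb), ca*sb, 0⟩)
    (hib : ib = ⟨0, ca*cb, sa*cb, -sb⟩)
    (hA : A * p = p * A)
    (hB : B * p - p * B = (v0 : ℝ) • (qI * ι - ι * qI))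
    (hC : C * p - p * C = (v0 : ℝ) • (qJ * ι - ι * qJ))
    (hE : E * p - p * E = (v0 : ℝ) • (qK * ι - ι * qK))
    (hF : A + qI * B + qJ * C + qK * E = ((-2*v0/r : ℝ) : ℍ[ℝ])) :
    ia⁻¹ * (r • ((-(sa*sb)) • B + (ca*sb) • C))
      + ib⁻¹ * (r • ((ca*cb) • B + (sa*cb) • C + (-sb) • E))
      = ((2*v0 : ℝ) : ℍ[ℝ]) := by
  have hinva : ia⁻¹ = (-(sb^2)⁻¹) • ia := by
    refine inv_eq_of_mul_eq_one_right ?_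
    apply Quaternion.ext <;> simp [Quaternion.re_mul, Quaternion.imI_mul, Quaternion.imJ_mul, Quaternion.imK_mul] <;> rw [hia]
    · field_simp; linear_combination (sb^2)*ha
    · field_simp; simp
    · field_simp; simp
    · field_simp; simp
  have hinvb : ib⁻¹ = -ib := by
    refine inv_eq_of_mul_eq_one_right ?_
    apply Quaternion.ext <;> simp [Quaternion.re_mul, Quaternion.imI_mul, Quaternion.imJ_mul, Quaternion.imK_mul] <;> rw [hib]
    · simp; linear_combination (cb^2)*ha + hb
    · simp; ring
    · simp; ring
    · simp; ring
  -- component equations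
  have eA1 := congrArg QuaternionAlgebra.imI hA
  have eA2 := congrArg QuaternionAlgebra.imJ hA
  have eA3 := congrArg QuaternionAlgebra.imK hA
  have eB1 := congrArg QuaternionAlgebra.imI hB
  have eB2 := congrArg QuaternionAlgebra.imJ hB
  have eB3 := congrArg QuaternionAlgebra.imK hB
  have eC1 := congrArg QuaternionAlgebra.imI hC
  have eC2 := congrArg QuaternionAlgebra.imJ hC
  have eC3 := congrArg QuaternionAlgebra.imK hC
  have eE1 := congrArg QuaternionAlgebra.imI hE
  have eE2 := congrArg QuaternionAlgebra.imJ hE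
  have eE3 := congrArg QuaternionAlgebra.imK hE
  have eF1 := congrArg QuaternionAlgebra.imI hF
  have eF2 := congrArg QuaternionAlgebra.imJ hF
  have eF3 := congrArg QuaternionAlgebra.imK hF
  simp only [Quaternion.imI_mul, Quaternion.imJ_mul, Quaternion.imK_mul,
    Quaternion.imI_sub, Quaternion.imJ_sub, Quaternion.imK_sub,
    Quaternion.imI_add, Quaternion.imJ_add, Quaternion.imK_add,
    Quaternion.imI_smul, Quaternion.imJ_smul, Quaternion.imK_smul,
    Quaternion.imI_coe, Quaternion.imJ_coe, Quaternion.imK_coe, smul_eq_mul]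
    at eA1 eA2 eA3 eB1 eB2 eB3 eC1 eC2 eC3 eE1 eE2 eE3 eF1 eF2 eF3
  simp only [hp, hι, qI, qJ, qK]
    at eA1 eA2 eA3 eB1 eB2 eB3 eC1 eC2 eC3 eE1 eE2 eE3 eF1 eF2 eF3
  -- span representations
  obtain ⟨LA, A1, A2, A3⟩ := span3 ca sa cb sb (r*A.imI) (r*A.imJ) (r*A.imK) ha hb
    (by linear_combination (1/2)*eA1) (by linear_combination (1/2)*eA2)
    (by linear_combination (1/2)*eA3)
  obtain ⟨LB, B1, B2, B3⟩ := span3 ca sa cb sb (r*B.imI - v0) (r*B.imJ) (r*B.imK) ha hb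
    (by linear_combination (1/2)*eB1) (by linear_combination (1/2)*eB2)
    (by linear_combination (1/2)*eB3)
  obtain ⟨LC, C1, C2, C3⟩ := span3 ca sa cb sb (r*C.imI) (r*C.imJ - v0) (r*C.imK) ha hb
    (by linear_combination (1/2)*eC1) (by linear_combination (1/2)*eC2)
    (by linear_combination (1/2)*eC3)
  obtain ⟨LE, E1, E2, E3⟩ := span3 ca sa cb sb (r*E.imI) (r*E.imJ) (r*E.imK - v0) ha hb
    (by linear_combination (1/2)*eE1) (by linear_combination (1/2)*eE2)
    (by linear_combination (1/2)*eE3)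
  -- Fueter equation in span coordinates
  have hF1' : LA*(ca*sb) + r*B.re + LC*cb - LE*(sa*sb) = 0 := by
    linear_combination r*eF1 - A1 - C3 + E2
  have hF2' : LA*(sa*sb) - LB*cb + r*C.re + LE*(ca*sb) = 0 := by
    linear_combination r*eF2 - A2 + B3 - E1
  have hF3' : LA*cb + LB*(sa*sb) - LC*(ca*sb) + r*E.re = 0 := by
    linear_combination r*eF3 - A3 - B2 + C1
  have I1 : r*((-(sa*sb))*B.re + (ca*sb)*C.re) = sb*(ca*cb*LB + sa*cb*LC - sb*LE) := by
    linear_combination (-(sb*sa))*hF1' + (sb*ca)*hF2' + (-(sb^2*LE))*ha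
  have I2 : (ca*sb)*LC - (sa*sb)*LB
      = -(sb*(r*((ca*cb)*B.re + (sa*cb)*C.re + (-sb)*E.re))) := by
    linear_combination sb*ca*cb*hF1' + sb*sa*cb*hF2' - sb^2*hF3'
      + (-(sb^2*cb*LA))*ha + (-(sb*(ca*LC - sa*LB)))*hb
  -- structured forms of the two directional derivatives
  have hX : r • ((-(sa*sb)) • B + (ca*sb) • C)
      = ((r*((-(sa*sb))*B.re + (ca*sb)*C.re) : ℝ) : ℍ[ℝ]) + v0 • ia
        + ((ca*sb)*LC - (sa*sb)*LB) • ι := by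
    apply Quaternion.ext <;> simp <;> rw [hι, hia]
    · simp; ring
    · simp; linear_combination (-(sa*sb))*B1 + (ca*sb)*C1
    · simp; linear_combination (-(sa*sb))*B2 + (ca*sb)*C2
    · simp; linear_combination (-(sa*sb))*B3 + (ca*sb)*C3
  have hY : r • ((ca*cb) • B + (sa*cb) • C + (-sb) • E)
      = ((r*((ca*cb)*B.re + (sa*cb)*C.re + (-sb)*E.re) : ℝ) : ℍ[ℝ]) + v0 • ib
        + (ca*cb*LB + sa*cb*LC - sb*LE) • ι := by
    apply Quaternion.ext <;> simp <;> rw [hι, hib]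
    · simp; ring
    · simp; linear_combination ca*cb*B1 + sa*cb*C1 + (-sb)*E1
    · simp; linear_combination ca*cb*B2 + sa*cb*C2 + (-sb)*E2
    · simp; linear_combination ca*cb*B3 + sa*cb*C3 + (-sb)*E3
  rw [hinva, hinvb, hX, hY]
  exact final v0 _ _ _ _ ca sa cb sb hsb ha hb ι ia ib hι hia hib I1 I2

set_option maxHeartbeats 2000000 in
/-- the imaginary derivative of a left-Class II function equals
twice its imaginary component. -/
theorem stmt17 (ω : Set ℍ[ℝ]) (hω : IsOpen ω) (hIm : ∀ p ∈ ω, p.im ≠ 0)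
    (f : ℍ[ℝ] → ℍ[ℝ]) (u v : ℍ[ℝ] → ℝ) (hf : IsClassIIWith f u v ω)
    (t r α β : ℝ) (hr : 0 < r) (hβ : Real.sin β ≠ 0)
    (hp : (t : ℍ[ℝ]) + r • sph α β ∈ ω) :
    (sphA α β)⁻¹ * deriv (fun s : ℝ => f ((t : ℍ[ℝ]) + r • sph s β)) α
      + (sphB α β)⁻¹ * deriv (fun s : ℝ => f ((t : ℍ[ℝ]) + r • sph α s)) β
    = ((2 * v ((t : ℍ[ℝ]) + r • sph α β) : ℝ) : ℍ[ℝ]) := by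
  classical
  have hfC := hf.1
  have hdec := hf.2.1
  have hfu := hf.2.2
  set p : ℍ[ℝ] := (t : ℍ[ℝ]) + r • sph α β with hpdef
  have hpmem : p ∈ ω := hp
  have hdiff : DifferentiableAt ℝ f p :=
    (hfC.differentiableOn one_ne_zero).differentiableAt (hω.mem_nhds hpmem)
  have hpmk : p = (⟨t, r*(Real.cos α*Real.sin β), r*(Real.sin α*Real.sin β), r*Real.cos β⟩ : ℍ[ℝ]) := by
    apply Quaternion.ext <;> simp [hpdef] <;> simp [sph]
  have him : p.im = r • sph α β := by
    apply Quaternion.ext <;> simp [hpdef] <;> simp [sph]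
  have hnormsph : ‖sph α β‖ = 1 := by
    have h1 : Quaternion.normSq (sph α β) = 1 := by
      simp only [Quaternion.normSq_def'] <;> simp only [sph]
      nlinarith [Real.sin_sq_add_cos_sq α, Real.sin_sq_add_cos_sq β]
    rw [norm_eq_sqrt_real_inner, Quaternion.inner_self, h1, Real.sqrt_one]
  have hnorm : ‖p.im‖ = r := by
    rw [him, norm_smul, hnormsph, Real.norm_eq_abs, abs_of_pos hr, mul_one]
  have hiota : iota p = sph α β := by
    rw [iota, hnorm, him, smul_smul, inv_mul_cancel₀ hr.ne', one_smul]
  -- CE on ω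
  have hCE : ∀ q ∈ ω, f q * q = q * f q := by
    intro q hq
    have him2 : q * Quaternion.im q = Quaternion.im q * q := by
      apply Quaternion.ext <;> simp <;> ring
    have hcommi : q * iota q = iota q * q := by
      rw [iota, mul_smul_comm, smul_mul_assoc, him2]
    rw [hdec q hq]
    have c1 : ((u q : ℝ) : ℍ[ℝ]) * q = q * ((u q : ℝ) : ℍ[ℝ]) := Quaternion.coe_commutes _ _
    have c2 : ((v q : ℝ) : ℍ[ℝ]) * q = q * ((v q : ℝ) : ℍ[ℝ]) := Quaternion.coe_commutes _ _
    calc (((u q : ℝ) : ℍ[ℝ]) + ((v q : ℝ) : ℍ[ℝ]) * iota q) * q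
        = ((u q : ℝ) : ℍ[ℝ]) * q + ((v q : ℝ) : ℍ[ℝ]) * (iota q * q) := by noncomm_ring
      _ = q * ((u q : ℝ) : ℍ[ℝ]) + ((v q : ℝ) : ℍ[ℝ]) * (q * iota q) := by rw [c1, hcommi]
      _ = (((v q : ℝ) : ℍ[ℝ]) * q) * iota q + q * ((u q : ℝ) : ℍ[ℝ]) := by noncomm_ring
      _ = (q * ((v q : ℝ) : ℍ[ℝ])) * iota q + q * ((u q : ℝ) : ℍ[ℝ]) := by rw [c2]
      _ = q * (((u q : ℝ) : ℍ[ℝ]) + ((v q : ℝ) : ℍ[ℝ]) * iota q) := by noncomm_ring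
  -- derivative of the CE relation
  have hCEf : (fun q => f q * q - q * f q) =ᶠ[nhds p] (fun _ => (0:ℍ[ℝ])) :=
    Filter.eventuallyEq_of_mem (hω.mem_nhds hpmem) (fun q hq => sub_eq_zero_of_eq (hCE q hq))
  have h01 : HasFDerivAt (fun q => f q * q - q * f q)
      ((f p • ContinuousLinearMap.id ℝ ℍ[ℝ] + (fderiv ℝ f p).smulRight p)
        - (p • fderiv ℝ f p + (ContinuousLinearMap.id ℝ ℍ[ℝ]).smulRight (f p))) p :=
    (hdiff.hasFDerivAt.mul' (hasFDerivAt_id p)).sub ((hasFDerivAt_id p).mul' hdiff.hasFDerivAt)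
  have h04 : HasFDerivAt (fun q => f q * q - q * f q) (0 : ℍ[ℝ] →L[ℝ] ℍ[ℝ]) p :=
    (hasFDerivAt_const (0:ℍ[ℝ]) p).congr_of_eventuallyEq hCEf
  have hzero := h01.unique h04
  have hfp : f p = ((u p : ℝ) : ℍ[ℝ]) + v p • sph α β := by
    rw [hdec p hpmem, hiota, Quaternion.coe_mul_eq_smul]
  have hcomm : ∀ w : ℍ[ℝ], fderiv ℝ f p w * p - p * fderiv ℝ f p w
      = v p • (w * sph α β - sph α β * w) := by
    intro w
    have h5 := DFunLike.congr_fun hzero w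
    simp only [ContinuousLinearMap.sub_apply, ContinuousLinearMap.add_apply,
      ContinuousLinearMap.smul_apply, ContinuousLinearMap.smulRight_apply,
      ContinuousLinearMap.id_apply, ContinuousLinearMap.zero_apply, smul_eq_mul] at h5
    have h6 : fderiv ℝ f p w * p - p * fderiv ℝ f p w = w * f p - f p * w := by
      linear_combination (norm := noncomm_ring) h5
    rw [h6, hfp]
    have cu : w * ((u p : ℝ) : ℍ[ℝ]) = ((u p : ℝ) : ℍ[ℝ]) * w := (Quaternion.coe_commutes _ _).symm
    calc w * (((u p : ℝ) : ℍ[ℝ]) + v p • sph α β) - (((u p : ℝ) : ℍ[ℝ]) + v p • sph α β) * w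
        = (w * ((u p : ℝ) : ℍ[ℝ]) - ((u p : ℝ) : ℍ[ℝ]) * w) + (v p • (w * sph α β) - v p • (sph α β * w)) := by
          simp only [mul_add, add_mul, mul_smul_comm, smul_mul_assoc]; abel
      _ = v p • (w * sph α β - sph α β * w) := by rw [cu, smul_sub]; abel
  -- the Fueter equation
  have hFu := hfu p hpmem
  rw [hnorm] at hFu
  unfold fueterL at hFu
  -- chain rule for the two sphere derivatives
  have hsphfunA : (fun s : ℝ => Real.cos s • (Real.sin β • qI) + Real.sin s • (Real.sin β • qJ)
      + Real.cos β • qK) = fun s : ℝ => sph s β := by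
    funext s
    apply Quaternion.ext <;> simp <;> simp [sph, qI, qJ, qK] <;> ring
  have h1A : HasDerivAt (fun s : ℝ => sph s β)
      ((-Real.sin α) • (Real.sin β • qI) + Real.cos α • (Real.sin β • qJ)) α := by
    have h2 := (((Real.hasDerivAt_cos α).smul_const (Real.sin β • qI)).add
      ((Real.hasDerivAt_sin α).smul_const (Real.sin β • qJ))).add_const (Real.cos β • qK)
    simp only [Pi.add_apply] at h2; rw [hsphfunA] at h2
    exact h2
  have hvalA : (-Real.sin α) • (Real.sin β • qI) + Real.cos α • (Real.sin β • qJ) = sphA α β := by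
    apply Quaternion.ext <;> simp <;> simp [sphA, qI, qJ] <;> ring
  have hcurveA : HasDerivAt (fun s : ℝ => (t : ℍ[ℝ]) + r • sph s β) (r • sphA α β) α :=
    ((hvalA ▸ h1A).const_smul r).const_add (t : ℍ[ℝ])
  have hsphfunB : (fun s : ℝ => Real.sin s • (Real.cos α • qI) + Real.sin s • (Real.sin α • qJ)
      + Real.cos s • qK) = fun s : ℝ => sph α s := by
    funext s
    apply Quaternion.ext <;> simp <;> simp [sph, qI, qJ, qK] <;> ring
  have h1B : HasDerivAt (fun s : ℝ => sph α s)
      (Real.cos β • (Real.cos α • qI) + Real.cos β • (Real.sin α • qJ) + (-Real.sin β) • qK) β := by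
    have h2 := (((Real.hasDerivAt_sin β).smul_const (Real.cos α • qI)).add
      ((Real.hasDerivAt_sin β).smul_const (Real.sin α • qJ))).add
      ((Real.hasDerivAt_cos β).smul_const qK)
    rw [← hsphfunB]
    exact h2
  have hvalB : Real.cos β • (Real.cos α • qI) + Real.cos β • (Real.sin α • qJ)
      + (-Real.sin β) • qK = sphB α β := by
    apply Quaternion.ext <;> simp <;> simp [sphB, qI, qJ, qK] <;> ring
  have hcurveB : HasDerivAt (fun s : ℝ => (t : ℍ[ℝ]) + r • sph α s) (r • sphB α β) β :=
    ((hvalB ▸ h1B).const_smul r).const_add (t : ℍ[ℝ])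
  have hdA : HasDerivAt (fun s : ℝ => f ((t : ℍ[ℝ]) + r • sph s β))
      (fderiv ℝ f p (r • sphA α β)) α := hdiff.hasFDerivAt.comp_hasDerivAt α hcurveA
  have hdB : HasDerivAt (fun s : ℝ => f ((t : ℍ[ℝ]) + r • sph α s))
      (fderiv ℝ f p (r • sphB α β)) β := hdiff.hasFDerivAt.comp_hasDerivAt β hcurveB
  rw [hdA.deriv, hdB.deriv]
  -- express the directional derivatives through the basis
  have hsphA : sphA α β = (-(Real.sin α * Real.sin β)) • qI + (Real.cos α * Real.sin β) • qJ := by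
    apply Quaternion.ext <;> simp <;> simp [sphA, qI, qJ]
  have hsphB : sphB α β = (Real.cos α * Real.cos β) • qI + (Real.sin α * Real.cos β) • qJ
      + (-Real.sin β) • qK := by
    apply Quaternion.ext <;> simp <;> simp [sphB, qI, qJ, qK]
  have hDA : fderiv ℝ f p (r • sphA α β)
      = r • ((-(Real.sin α * Real.sin β)) • fderiv ℝ f p qI
        + (Real.cos α * Real.sin β) • fderiv ℝ f p qJ) := by
    rw [hsphA]
    simp only [map_smul, map_add]
  have hDB : fderiv ℝ f p (r • sphB α β)
      = r • ((Real.cos α * Real.cos β) • fderiv ℝ f p qI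
        + (Real.sin α * Real.cos β) • fderiv ℝ f p qJ
        + (-Real.sin β) • fderiv ℝ f p qK) := by
    rw [hsphB]
    simp only [map_smul, map_add]
  rw [hDA, hDB]
  -- assemble via the key algebraic lemma
  have hA' : fderiv ℝ f p 1 * p = p * fderiv ℝ f p 1 := by
    have := hcomm 1
    simp only [one_mul, mul_one, sub_self, smul_zero] at this
    exact sub_eq_zero.mp this
  exact key t r (v p) (Real.cos α) (Real.sin α) (Real.cos β) (Real.sin β) hr.ne' hβ
    (Real.cos_sq_add_sin_sq α) (Real.cos_sq_add_sin_sq β)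
    p (sph α β) (sphA α β) (sphB α β)
    (fderiv ℝ f p 1) (fderiv ℝ f p qI) (fderiv ℝ f p qJ) (fderiv ℝ f p qK)
    hpmk rfl rfl rfl hA' (hcomm qI) (hcomm qJ) (hcomm qK) hFu

end
end

section
/- Let f be a C² left-Class II function on an open set ω ⊆ ℍ with ω ∩ ℝ = ∅. Then the chiral difference ∂f/∂_l p̄ − ∂f/∂_r p̄ is left Fueter-regular on ω, i.e. ∂/∂_l p̄ (∂f/∂_l p̄ − ∂f/∂_r p̄) = 0 on ω. -/
open Quaternion

noncomputable section

/-- A quaternion with vanishing imaginary parts commutes with every quaternion. -/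
lemma real_commutes {q : ℍ[ℝ]} (hI : q.imI = 0) (hJ : q.imJ = 0) (hK : q.imK = 0)
    (x : ℍ[ℝ]) : q * x = x * q := by
  have hq : q = ((q.re : ℝ) : ℍ[ℝ]) := by
    ext <;> simp [hI, hJ, hK]
  rw [hq]
  exact Quaternion.coe_commutes q.re x

/-- `imI` as a continuous linear map. -/
def imICLM : ℍ[ℝ] →L[ℝ] ℝ :=
  { toFun := fun q => q.imI
    map_add' := fun _ _ => rfl
    map_smul' := fun _ _ => rfl
    cont := Quaternion.continuous_imI }

/-- `imJ` as a continuous linear map. -/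
def imJCLM : ℍ[ℝ] →L[ℝ] ℝ :=
  { toFun := fun q => q.imJ
    map_add' := fun _ _ => rfl
    map_smul' := fun _ _ => rfl
    cont := Quaternion.continuous_imJ }

/-- `imK` as a continuous linear map. -/
def imKCLM : ℍ[ℝ] →L[ℝ] ℝ :=
  { toFun := fun q => q.imK
    map_add' := fun _ _ => rfl
    map_smul' := fun _ _ => rfl
    cont := Quaternion.continuous_imK }

set_option maxHeartbeats 2000000 in
/-- The key algebraic identity. -/
lemma main_alg (T : ℍ[ℝ] → ℍ[ℝ] → ℍ[ℝ])
    (hs : ∀ a b, T a b = T b a)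
    (hc : ∀ w x, (T w 1 + qI * T w qI + qJ * T w qJ + qK * T w qK) * x
        = x * (T w 1 + qI * T w qI + qJ * T w qJ + qK * T w qK)) :
    T 1 1 + qI * T 1 qI + qJ * T 1 qJ + qK * T 1 qK
      - (T 1 1 + T 1 qI * qI + T 1 qJ * qJ + T 1 qK * qK)
    + qI * (T qI 1 + qI * T qI qI + qJ * T qI qJ + qK * T qI qK
      - (T qI 1 + T qI qI * qI + T qI qJ * qJ + T qI qK * qK))
    + qJ * (T qJ 1 + qI * T qJ qI + qJ * T qJ qJ + qK * T qJ qK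
      - (T qJ 1 + T qJ qI * qI + T qJ qJ * qJ + T qJ qK * qK))
    + qK * (T qK 1 + qI * T qK qI + qJ * T qK qJ + qK * T qK qK
      - (T qK 1 + T qK qI * qI + T qK qJ * qJ + T qK qK * qK)) = 0 := by
  simp only [mul_sub]
  rw [← hc qI qI, ← hc qJ qJ, ← hc qK qK]
  rw [hs qI 1, hs qJ 1, hs qK 1, hs qJ qI, hs qK qI, hs qK qJ]
  noncomm_ring


set_option maxHeartbeats 2000000 in
/-- the chiral difference of a C² left-Class II function is left
Fueter-regular. -/
theorem stmt18 (ω : Set ℍ[ℝ]) (hω : IsOpen ω) (hIm : ∀ p ∈ ω, p.im ≠ 0)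
    (f : ℍ[ℝ] → ℍ[ℝ]) (hf2 : ContDiffOn ℝ 2 f ω) (hf : IsClassII f ω) :
    ∀ p ∈ ω, fueterL (fun q => fueterL f q - fueterR f q) p = 0 := by
  intro p hp
  obtain ⟨u, v, hC1, hdec, hPDE⟩ := hf
  have hmem : ω ∈ nhds p := hω.mem_nhds hp
  have hp2 : ContDiffAt ℝ 2 f p := hf2.contDiffAt hmem
  have hF1 : ContDiffAt ℝ 1 (fderiv ℝ f) p := hp2.fderiv_right (by norm_num)
  have hF : DifferentiableAt ℝ (fderiv ℝ f) p := hF1.differentiableAt one_ne_zero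
  set B := fderiv ℝ (fderiv ℝ f) p with hB
  have hsymm : ∀ a b, B a b = B b a := hp2.isSymmSndFDerivAt (by norm_num)
  have hw : ∀ w : ℍ[ℝ], HasFDerivAt (fun q => fderiv ℝ f q w) (B.flip w) p := by
    intro w
    have h := hF.hasFDerivAt.clm_apply (hasFDerivAt_const w p)
    simpa using h
  have HL : HasFDerivAt (fueterL f)
      (B.flip 1 + qI • B.flip qI + qJ • B.flip qJ + qK • B.flip qK) p := by
    unfold fueterL
    exact (((hw 1).add ((hw qI).const_mul qI)).add ((hw qJ).const_mul qJ)).add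
      ((hw qK).const_mul qK)
  have HR : HasFDerivAt (fueterR f)
      (B.flip 1 + (B.flip qI).smulRight qI + (B.flip qJ).smulRight qJ
        + (B.flip qK).smulRight qK) p := by
    unfold fueterR
    exact (((hw 1).add ((hw qI).mul_const' qI)).add ((hw qJ).mul_const' qJ)).add
      ((hw qK).mul_const' qK)
  have HD := HL.sub HR
  -- realness of the derivative of `fueterL f` at `p`
  have hzero : ∀ (L : ℍ[ℝ] →L[ℝ] ℝ), (∀ r : ℝ, L ((r : ℝ) : ℍ[ℝ]) = 0) →
      ∀ w, L (fderiv ℝ (fueterL f) p w) = 0 := by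
    intro L hL w
    have hgd : DifferentiableAt ℝ (fueterL f) p := HL.differentiableAt
    have h1 : fderiv ℝ (L ∘ fueterL f) p = L.comp (fderiv ℝ (fueterL f) p) :=
      (L.hasFDerivAt.comp p hgd.hasFDerivAt).fderiv
    have h2 : (L ∘ fueterL f) =ᶠ[nhds p] fun _ => (0 : ℝ) := by
      filter_upwards [hmem] with q hq
      simp only [Function.comp]
      rw [hPDE q hq, hL]
    have h3 : fderiv ℝ (L ∘ fueterL f) p = 0 := by
      rw [h2.fderiv_eq]
      exact fderiv_const_apply 0
    have h4 : L.comp (fderiv ℝ (fueterL f) p) = 0 := by rw [← h1, h3]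
    calc L (fderiv ℝ (fueterL f) p w) = (L.comp (fderiv ℝ (fueterL f) p)) w := rfl
      _ = 0 := by rw [h4]; rfl
  have hI0 : ∀ w, (fderiv ℝ (fueterL f) p w).imI = 0 :=
    hzero imICLM (fun r => by simp [imICLM]; rfl)
  have hJ0 : ∀ w, (fderiv ℝ (fueterL f) p w).imJ = 0 :=
    hzero imJCLM (fun r => by simp [imJCLM]; rfl)
  have hK0 : ∀ w, (fderiv ℝ (fueterL f) p w).imK = 0 :=
    hzero imKCLM (fun r => by simp [imKCLM]; rfl)
  have hLap : ∀ w, fderiv ℝ (fueterL f) p w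
      = B w 1 + qI * B w qI + qJ * B w qJ + qK * B w qK := by
    intro w
    rw [HL.fderiv]
    simp [ContinuousLinearMap.add_apply, ContinuousLinearMap.smul_apply,
      ContinuousLinearMap.flip_apply, smul_eq_mul]
  have hcomm : ∀ w x, (B w 1 + qI * B w qI + qJ * B w qJ + qK * B w qK) * x
      = x * (B w 1 + qI * B w qI + qJ * B w qJ + qK * B w qK) := by
    intro w x
    rw [← hLap w]
    exact real_commutes (hI0 w) (hJ0 w) (hK0 w) x
  show fderiv ℝ (fun q => fueterL f q - fueterR f q) p 1
      + qI * fderiv ℝ (fun q => fueterL f q - fueterR f q) p qI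
      + qJ * fderiv ℝ (fun q => fueterL f q - fueterR f q) p qJ
      + qK * fderiv ℝ (fun q => fueterL f q - fueterR f q) p qK = 0
  rw [show (fun q => fueterL f q - fueterR f q) = fueterL f - fueterR f from rfl, HD.fderiv]
  simp only [ContinuousLinearMap.sub_apply, ContinuousLinearMap.add_apply,
    ContinuousLinearMap.smul_apply, ContinuousLinearMap.smulRight_apply,
    ContinuousLinearMap.flip_apply, smul_eq_mul]
  exact main_alg (fun a b => B a b) hsymm hcomm

end
end

section
/- (Mirror operator) Let c₁, c₂ ∈ ℝ with c₂ > 0, let 0 ≤ s < S, let A = {(t,r) : r > 0, s < √((t−c₁)² + (r−c₂)²) < S} be an annulus contained in the upper half plane, let V be a connected open set of spherical parameters (α,β) with sin β ≠ 0, and let W = {t + r·ι(α,β) : (t,r) ∈ A, (α,β) ∈ V} ⊆ ℍ. If f is a left-Class II function on W, then the function M(f)(p) = conj(f(conj(p))) is a right-Class II function on the conjugated set W̄ = {conj(p) : p ∈ W}. -/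
open Quaternion

noncomputable section

/-- Quaternionic conjugation as a continuous linear equivalence over `ℝ`. -/
def starCLE : ℍ[ℝ] ≃L[ℝ] ℍ[ℝ] :=
{ toFun := star, invFun := star,
  map_add' := star_add,
  map_smul' := fun r x => by ext <;> simp
  left_inv := star_star, right_inv := star_star,
  continuous_toFun := continuous_star,
  continuous_invFun := continuous_star }

lemma mirror_fderiv (f : ℍ[ℝ] → ℍ[ℝ]) (p h : ℍ[ℝ]) :
    fderiv ℝ (fun q => star (f (star q))) p h = star (fderiv ℝ f (star p) (star h)) := by
  have : (fun q : ℍ[ℝ] => star (f (star q))) = ⇑starCLE ∘ (f ∘ ⇑starCLE) := rfl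
  rw [this, starCLE.comp_fderiv, starCLE.comp_right_fderiv]
  rfl

lemma star_iota (p : ℍ[ℝ]) : star (iota p) = - iota p := by
  unfold iota; ext <;> simp

lemma iota_star (p : ℍ[ℝ]) : iota (star p) = - iota p := by
  unfold iota
  rw [Quaternion.im_star, norm_neg, smul_neg]

lemma qI_star : star qI = -qI := by ext <;> simp <;> simp [qI]
lemma qJ_star : star qJ = -qJ := by ext <;> simp <;> simp [qJ]
lemma qK_star : star qK = -qK := by ext <;> simp <;> simp [qK]

/-- Mirror operator: if `f` is left-Class II on the tube `W`
over an annulus in the upper half plane, then `M(f)(p) = conj (f (conj p))` is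
right-Class II on the conjugated set `W̄`. -/
theorem stmt19 (c₁ c₂ s S : ℝ) (hc₂ : 0 < c₂) (hs : 0 ≤ s) (hsS : s < S)
    (V : Set (ℝ × ℝ)) (hVopen : IsOpen V) (hVconn : IsConnected V)
    (hVβ : ∀ q ∈ V, Real.sin q.2 ≠ 0)
    (W : Set ℍ[ℝ])
    (hW : W = {p : ℍ[ℝ] | ∃ t r α β : ℝ,
      (0 < r ∧ s < Real.sqrt ((t - c₁) ^ 2 + (r - c₂) ^ 2) ∧
        Real.sqrt ((t - c₁) ^ 2 + (r - c₂) ^ 2) < S) ∧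
      (α, β) ∈ V ∧ p = (t : ℍ[ℝ]) + r • sph α β})
    (f : ℍ[ℝ] → ℍ[ℝ]) (hf : IsClassII f W) :
    IsClassIIR (fun p => star (f (star p))) (star '' W) := by
  obtain ⟨u, v, hC, hdec, hfue⟩ := hf
  have hmem : ∀ p : ℍ[ℝ], p ∈ star '' W → star p ∈ W := by
    rintro p ⟨q, hq, rfl⟩
    simpa using hq
  refine ⟨fun p => u (star p), fun p => v (star p), ?_, ?_, ?_⟩
  · exact starCLE.contDiff.comp_contDiffOn
      (hC.comp starCLE.contDiff.contDiffOn hmem)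
  · intro p hp
    have h := hdec (star p) (hmem p hp)
    show star (f (star p)) = _
    rw [h, star_add, star_mul, Quaternion.star_coe, Quaternion.star_coe, iota_star, star_neg, star_iota, neg_neg,
      ← Quaternion.coe_commutes]
  · intro p hp
    have h := hfue (star p) (hmem p hp)
    have h2 := congrArg star h
    unfold fueterL at h2
    unfold fueterR
    rw [mirror_fderiv, mirror_fderiv, mirror_fderiv, mirror_fderiv,
      star_one, qI_star, qJ_star, qK_star, map_neg, map_neg, map_neg,
      star_neg, star_neg, star_neg] at *
    rw [star_add, star_add, star_add, star_mul, star_mul, star_mul,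
      qI_star, qJ_star, qK_star, Quaternion.star_coe] at h2
    rw [Quaternion.im_star, norm_neg] at h2
    simp only [mul_neg, neg_mul] at h2 ⊢
    exact h2

end
end
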